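/- Let K ≥ 1 be an integer, z ≥ 0 a real, a₀, a₁, …, a_K nonnegative reals and y₀, y₁, …, y_{K−1} nonnegative reals such that a_k ≤ y_k + z·√(a_{k+1}) for all 0 ≤ k < K. Then a₀ ≤ Σ_{k=0}^{K−1} z^(2−2^(1−k)) · y_k^(2^(−k)) + z^(2−2^(1−K)) · a_K^(2^(−K)), where all exponents are real powers. -/
import Mathlib

open Real Finset

lemma my_sqrt_add_le (x y : ℝ) (hx : 0 ≤ x) (hy : 0 ≤ y) :
    Real.sqrt (x + y) ≤ Real.sqrt x + Real.sqrt y := by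
  have h1 := Real.sq_sqrt hx
  have h2 := Real.sq_sqrt hy
  have h3 := Real.sqrt_nonneg x
  have h4 := Real.sqrt_nonneg y
  have : x + y ≤ (Real.sqrt x + Real.sqrt y) ^ 2 := by nlinarith
  calc Real.sqrt (x + y) ≤ Real.sqrt ((Real.sqrt x + Real.sqrt y) ^ 2) :=
        Real.sqrt_le_sqrt this
    _ = Real.sqrt x + Real.sqrt y := Real.sqrt_sq (by positivity)

lemma my_sqrt_sum_le {ι : Type*} (s : Finset ι) (f : ι → ℝ) (hf : ∀ i ∈ s, 0 ≤ f i) :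
    Real.sqrt (∑ i ∈ s, f i) ≤ ∑ i ∈ s, Real.sqrt (f i) := by
  induction s using Finset.cons_induction with
  | empty => simp
  | cons a s ha ih =>
    rw [Finset.sum_cons, Finset.sum_cons]
    refine (my_sqrt_add_le _ _ (hf a (Finset.mem_cons_self a s))
      (Finset.sum_nonneg fun i hi => hf i (Finset.mem_cons_of_mem hi))).trans ?_
    gcongr
    exact ih fun i hi => hf i (Finset.mem_cons_of_mem hi)

/-- Unrolling a recursive bound `a_k ≤ y_k + z √(a_{k+1})`. -/
theorem recursive_sqrt_bound_unrolled
    (K : ℕ) (hK : 1 ≤ K) (z : ℝ) (hz : 0 ≤ z) (a y : ℕ → ℝ)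
    (ha : ∀ k ≤ K, 0 ≤ a k) (hy : ∀ k < K, 0 ≤ y k)
    (hrec : ∀ k < K, a k ≤ y k + z * Real.sqrt (a (k + 1))) :
    a 0 ≤
      (∑ k ∈ Finset.range K,
        z ^ ((2 : ℝ) - (2 : ℝ) ^ ((1 : ℝ) - (k : ℝ))) * y k ^ ((2 : ℝ) ^ (-(k : ℝ)))) +
      z ^ ((2 : ℝ) - (2 : ℝ) ^ ((1 : ℝ) - (K : ℝ))) * a K ^ ((2 : ℝ) ^ (-(K : ℝ))) := by
  induction K, hK using Nat.le_induction generalizing a y with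
  | base =>
    simp only [Finset.sum_range_one, Nat.cast_zero, Nat.cast_one, neg_zero]
    norm_num
    have h := hrec 0 (by norm_num)
    calc a 0 ≤ y 0 + z * Real.sqrt (a 1) := h
      _ = y 0 + z * a 1 ^ ((1:ℝ)/2) := by
          rw [Real.sqrt_eq_rpow]
  | succ K hK1 IH =>
    -- apply IH to shifted sequences
    have IH' := IH (fun k => a (k + 1)) (fun k => y (k + 1))
      (fun k hk => ha (k + 1) (by omega))
      (fun k hk => hy (k + 1) (by omega))
      (fun k hk => hrec (k + 1) (by omega))
    set E : ℕ → ℝ := fun k => (2 : ℝ) - (2 : ℝ) ^ ((1 : ℝ) - (k : ℝ)) with hE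
    set e : ℕ → ℝ := fun k => (2 : ℝ) ^ (-(k : ℝ)) with he
    have hEnonneg : ∀ k : ℕ, 0 ≤ E k := by
      intro k
      have : (2:ℝ) ^ ((1:ℝ) - (k:ℝ)) ≤ (2:ℝ) ^ (1:ℝ) := by
        apply Real.rpow_le_rpow_of_exponent_le (by norm_num)
        have : (0:ℝ) ≤ (k:ℝ) := Nat.cast_nonneg k
        linarith
      simp only [hE]
      rw [Real.rpow_one] at this
      linarith
    have hEsucc : ∀ k : ℕ, E (k + 1) = 1 + E k / 2 := by
      intro k
      simp only [hE]
      push_cast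
      rw [show (1:ℝ) - ((k:ℝ) + 1) = ((1:ℝ) - k) + (-1) by ring,
        Real.rpow_add (by norm_num), Real.rpow_neg_one]
      ring
    have hesucc : ∀ k : ℕ, e (k + 1) = e k / 2 := by
      intro k
      simp only [he]
      push_cast
      rw [show -((k:ℝ) + 1) = (-(k:ℝ)) + (-1) by ring,
        Real.rpow_add (by norm_num), Real.rpow_neg_one]
      ring
    -- key term rewriting: z * sqrt (z^(E k) * t^(e k)) = z^(E (k+1)) * t^(e (k+1))
    have hterm : ∀ (k : ℕ) (t : ℝ), 0 ≤ t →
        z * Real.sqrt (z ^ E k * t ^ e k) = z ^ E (k + 1) * t ^ e (k + 1) := by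
      intro k t ht
      have hsplit : z ^ ((1:ℝ) + E k * (1/2)) = z * z ^ (E k * (1/2)) := by
        rw [Real.rpow_add_of_nonneg hz (by norm_num) (by have := hEnonneg k; positivity),
          Real.rpow_one]
      rw [Real.sqrt_mul (by positivity), Real.sqrt_eq_rpow, Real.sqrt_eq_rpow,
        ← Real.rpow_mul ht, ← Real.rpow_mul hz, hEsucc, hesucc,
        show (1:ℝ) + E k / 2 = 1 + E k * (1/2) by ring, hsplit,
        show e k / 2 = e k * (1/2) by ring]
      ring
    -- nonnegativity of terms in IH sum
    have hterm_nonneg : ∀ k ∈ Finset.range K, 0 ≤ z ^ E k * y (k + 1) ^ e k := by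
      intro k hk
      have := hy (k + 1) (by simp at hk; omega)
      positivity
    have htail_nonneg : 0 ≤ z ^ E K * a (K + 1) ^ e K := by
      have := ha (K + 1) le_rfl
      positivity
    -- bound for sqrt (a 1)
    have hsum_nonneg : 0 ≤ (∑ k ∈ Finset.range K, z ^ E k * y (k + 1) ^ e k) +
        z ^ E K * a (K + 1) ^ e K :=
      add_nonneg (Finset.sum_nonneg hterm_nonneg) htail_nonneg
    have hsqrt : Real.sqrt (a 1) ≤
        (∑ k ∈ Finset.range K, Real.sqrt (z ^ E k * y (k + 1) ^ e k)) +
        Real.sqrt (z ^ E K * a (K + 1) ^ e K) := by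
      refine (Real.sqrt_le_sqrt IH').trans ?_
      refine (my_sqrt_add_le _ _ (Finset.sum_nonneg hterm_nonneg) htail_nonneg).trans ?_
      gcongr
      exact my_sqrt_sum_le _ _ hterm_nonneg
    -- main chain
    have h0 := hrec 0 (by omega)
    have hE0 : E 0 = 0 := by simp [hE]
    have he0 : e 0 = 1 := by simp [he]
    calc a 0 ≤ y 0 + z * Real.sqrt (a 1) := h0
      _ ≤ y 0 + z * ((∑ k ∈ Finset.range K, Real.sqrt (z ^ E k * y (k + 1) ^ e k)) +
            Real.sqrt (z ^ E K * a (K + 1) ^ e K)) := by gcongr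
      _ = y 0 + ((∑ k ∈ Finset.range K, z * Real.sqrt (z ^ E k * y (k + 1) ^ e k)) +
            z * Real.sqrt (z ^ E K * a (K + 1) ^ e K)) := by
            rw [mul_add, Finset.mul_sum]
      _ = y 0 + ((∑ k ∈ Finset.range K, z ^ E (k + 1) * y (k + 1) ^ e (k + 1)) +
            z ^ E (K + 1) * a (K + 1) ^ e (K + 1)) := by
            rw [hterm K _ (ha (K + 1) le_rfl)]
            congr 1
            congr 1
            apply Finset.sum_congr rfl
            intro k hk
            exact hterm k _ (hy (k + 1) (by simp at hk; omega))
      _ = (∑ k ∈ Finset.range (K + 1), z ^ E k * y k ^ e k) +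
            z ^ E (K + 1) * a (K + 1) ^ e (K + 1) := by
            rw [Finset.sum_range_succ' (fun k => z ^ E k * y k ^ e k) K, hE0, he0,
              Real.rpow_zero, Real.rpow_one]
            ring
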